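/- (Stealthy replay attacks.) Let F, S, H, K1, K̂, B, K be real n×n matrices with K̂ = K1 + F·H, and let κ, μ > 0 be such that ‖exp(s·F)‖ ≤ κ·e^{−μ·s} for all s ≥ 0. Let w, ρ : ℝ → ℝⁿ with w continuous, ρ continuously differentiable, ‖w(t)‖ ≤ w̄ and ‖ρ(t)‖ ≤ ρ̄ for all t. Let T_a ∈ ℝ, T > 0, and let e : ℝ → ℝⁿ be differentiable and satisfy, for all t ≥ T_a, ė(t) = F·e(t) + S·(w(t−T) + B·K·ρ(t−T)) − K1·ρ(t−T) − H·ρ̇(t−T). Let ē_{T_a} ≥ 0 and define the threshold ē(t) = κ·e^{−μ(t−T_a)}·(ē_{T_a} + ‖H‖·ρ̄) + ‖H‖·ρ̄ + ∫_{T_a}^{t} κ·e^{−μ(t−τ)}·(‖S‖·w̄ + ‖S·B·K − K̂‖·ρ̄) dτ. If ‖e(T_a)‖ ≤ ē_{T_a}, then for all t ∈ [T_a, T_a + T), the residual r(t) = e(t) + ρ(t−T) satisfies ‖r(t)‖ ≤ ē(t) + ρ̄; that is, the replay attack is not detected during its first period. -/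

import Mathlib

open NormedSpace intervalIntegral

set_option maxHeartbeats 1000000
set_option synthInstance.maxHeartbeats 400000

/-- **Stealthy replay attacks (Statement 2, Proposition 1).**
Matrices are continuous linear maps on Euclidean space (so `‖·‖` is the
operator norm induced by the Euclidean norm), with matrix product `*`.
Assume `Khat = K1 + F·H`, `κ, μ > 0` with `‖exp(s F)‖ ≤ κ e^{−μ s}` for all
`s ≥ 0`, bounded noises `‖w‖ ≤ wbar`, `‖ρ‖ ≤ ρbar` (`w` continuous, `ρ` C¹),
`T > 0`, and the error dynamics under replay attack for `t ≥ T_a`.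
If `‖e(T_a)‖ ≤ ebarTa`, then for all `t ∈ [T_a, T_a + T)` the residual
`r(t) = e(t) + ρ(t−T)` satisfies `‖r(t)‖ ≤ ebar(t) + ρbar`, where `ebar` is
the time-varying threshold; i.e. the replay attack is not detected during
its first period. -/
theorem replay_attack_stealthy {n : ℕ}
    (F S H K1 Khat B K : EuclideanSpace ℝ (Fin n) →L[ℝ] EuclideanSpace ℝ (Fin n))
    (hKhat : Khat = K1 + F * H)
    (κ μ : ℝ) (hκ : 0 < κ) (hμ : 0 < μ)
    (hFdecay : ∀ s : ℝ, 0 ≤ s → ‖NormedSpace.exp (s • F)‖ ≤ κ * Real.exp (-μ * s))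
    (w ρ ρ' : ℝ → EuclideanSpace ℝ (Fin n))
    (wbar ρbar : ℝ)
    (hw : Continuous w)
    (hρ : ∀ t : ℝ, HasDerivAt ρ (ρ' t) t) (hρ' : Continuous ρ')
    (hwbound : ∀ t : ℝ, ‖w t‖ ≤ wbar)
    (hρbound : ∀ t : ℝ, ‖ρ t‖ ≤ ρbar)
    (T_a T : ℝ) (hT : 0 < T)
    (e : ℝ → EuclideanSpace ℝ (Fin n))
    (hode : ∀ t : ℝ, T_a ≤ t →
      HasDerivAt e
        (F (e t) + S (w (t - T) + (B * K) (ρ (t - T)))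
          - K1 (ρ (t - T)) - H (ρ' (t - T))) t)
    (ebarTa : ℝ) (hebarTa : 0 ≤ ebarTa)
    (ebar : ℝ → ℝ)
    (hebar : ∀ t : ℝ, ebar t =
      κ * Real.exp (-μ * (t - T_a)) * (ebarTa + ‖H‖ * ρbar) + ‖H‖ * ρbar
      + ∫ τ in T_a..t,
          κ * Real.exp (-μ * (t - τ)) * (‖S‖ * wbar + ‖S * B * K - Khat‖ * ρbar))
    (hinit : ‖e T_a‖ ≤ ebarTa) :
    ∀ t : ℝ, T_a ≤ t → t < T_a + T → ‖e t + ρ (t - T)‖ ≤ ebar t + ρbar := by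
  intro t ht _
  have hρbar0 : 0 ≤ ρbar := le_trans (norm_nonneg _) (hρbound 0)
  have hwbar0 : 0 ≤ wbar := le_trans (norm_nonneg _) (hwbound 0)
  set c : ℝ := ‖S‖ * wbar + ‖S * B * K - Khat‖ * ρbar with hc
  set g : ℝ → EuclideanSpace ℝ (Fin n) :=
    fun τ => S (w (τ - T)) + (S * B * K - Khat) (ρ (τ - T)) with hg
  set z : ℝ → EuclideanSpace ℝ (Fin n) := fun τ => e τ + H (ρ (τ - T)) with hz
  have hgbound : ∀ τ, ‖g τ‖ ≤ c := by
    intro τ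
    refine (norm_add_le _ _).trans (add_le_add ?_ ?_)
    · exact (S.le_opNorm _).trans (mul_le_mul_of_nonneg_left (hwbound _) (norm_nonneg _))
    · exact ((S * B * K - Khat).le_opNorm _).trans
        (mul_le_mul_of_nonneg_left (hρbound _) (norm_nonneg _))
  have hc0 : 0 ≤ c := le_trans (norm_nonneg _) (hgbound 0)
  have hρc : Continuous ρ := continuous_iff_continuousAt.2 fun s => (hρ s).continuousAt
  have hgc : Continuous g :=
    (S.continuous.comp (hw.comp (continuous_sub_right T))).add
      ((S * B * K - Khat).continuous.comp (hρc.comp (continuous_sub_right T)))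
  -- derivative of shifted ρ
  have hρT : ∀ τ : ℝ, HasDerivAt (fun s => ρ (s - T)) (ρ' (τ - T)) τ := by
    intro τ
    have h1 : HasDerivAt (fun s : ℝ => s - T) 1 τ := (hasDerivAt_id τ).sub_const T
    have h2 := (hρ (τ - T)).scomp τ h1
    simp only [one_smul] at h2
    exact h2
  -- derivative of z
  have hzder : ∀ τ : ℝ, T_a ≤ τ → HasDerivAt z (F (z τ) + g τ) τ := by
    intro τ hτ
    have h1 := (hode τ hτ).add (H.hasFDerivAt.comp_hasDerivAt τ (hρT τ))
    refine h1.congr_deriv ?_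
    simp only [hz, hg, hKhat, ContinuousLinearMap.mul_apply, ContinuousLinearMap.add_apply,
      ContinuousLinearMap.sub_apply, map_add, map_sub]
    abel
  -- exp facts
  have hcomm : ∀ a b : ℝ, Commute (a • F) (b • F) := by
    intro a b
    show a • F * b • F = b • F * a • F
    ext x
    simp only [ContinuousLinearMap.mul_apply, ContinuousLinearMap.smul_apply, map_smul]
    rw [smul_comm]
  have hmul : ∀ a b : ℝ, NormedSpace.exp (a • F) * NormedSpace.exp (b • F)
      = NormedSpace.exp ((a + b) • F) := by
    intro a b
    rw [show (a + b) • F = a • F + b • F from add_smul a b F,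
      NormedSpace.exp_add_of_commute_of_mem_ball (𝕂 := ℝ) (hcomm a b)
        ((NormedSpace.expSeries_radius_eq_top ℝ
          (EuclideanSpace ℝ (Fin n) →L[ℝ] EuclideanSpace ℝ (Fin n))).symm ▸ edist_lt_top _ _)
        ((NormedSpace.expSeries_radius_eq_top ℝ
          (EuclideanSpace ℝ (Fin n) →L[ℝ] EuclideanSpace ℝ (Fin n))).symm ▸ edist_lt_top _ _)]
  have hexpzero : NormedSpace.exp ((0:ℝ) • F) = 1 := by
    rw [show ((0:ℝ) • F) = 0 from zero_smul ℝ F, NormedSpace.exp_zero]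
  have hexpc : ∀ a : ℝ, Continuous fun s : ℝ => NormedSpace.exp ((a - s) • F) :=
    fun a => (continuous_iff_continuousAt.2 fun x =>
      (NormedSpace.exp_analytic (𝕂 := ℝ) x).continuousAt).comp ((continuous_const.sub continuous_id).smul
      continuous_const)
  have hAder : ∀ τ : ℝ, HasDerivAt (fun s : ℝ => NormedSpace.exp ((T_a - s) • F))
      (-(NormedSpace.exp ((T_a - τ) • F) * F)) τ := by
    intro τ
    have h1 := hasDerivAt_exp_smul_const (𝕂 := ℝ) F (T_a - τ)
    have h2 : HasDerivAt (fun s : ℝ => T_a - s) (-1) τ := (hasDerivAt_id τ).const_sub T_a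
    have h3 := h1.scomp τ h2
    simp only [neg_smul, one_smul] at h3
    exact h3
  -- derivative of v
  have hvder : ∀ τ : ℝ, T_a ≤ τ → HasDerivAt
      (fun s => NormedSpace.exp ((T_a - s) • F) (z s))
      (NormedSpace.exp ((T_a - τ) • F) (g τ)) τ := by
    intro τ hτ
    have h1 := (hAder τ).clm_apply (hzder τ hτ)
    refine h1.congr_deriv ?_
    simp only [ContinuousLinearMap.neg_apply, ContinuousLinearMap.mul_apply, map_add]
    abel
  -- continuity of the integrand
  have hintc : Continuous fun τ : ℝ => NormedSpace.exp ((T_a - τ) • F) (g τ) :=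
    (hexpc T_a).clm_apply hgc
  -- FTC
  have key : NormedSpace.exp ((T_a - t) • F) (z t) - z T_a
      = ∫ τ in T_a..t, NormedSpace.exp ((T_a - τ) • F) (g τ) := by
    have h1 := intervalIntegral.integral_eq_sub_of_hasDerivAt
      (f := fun s => NormedSpace.exp ((T_a - s) • F) (z s))
      (f' := fun τ => NormedSpace.exp ((T_a - τ) • F) (g τ))
      (fun τ hτ => hvder τ (by rw [Set.uIcc_of_le ht] at hτ; exact hτ.1))
      (hintc.intervalIntegrable _ _)
    rw [h1]
    congr 1
    show z T_a = NormedSpace.exp ((T_a - T_a) • F) (z T_a)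
    rw [sub_self, hexpzero, ContinuousLinearMap.one_apply]
  -- variation of constants formula
  have hzt : z t = NormedSpace.exp ((t - T_a) • F) (z T_a)
      + ∫ τ in T_a..t, NormedSpace.exp ((t - τ) • F) (g τ) := by
    have h1 : NormedSpace.exp ((T_a - t) • F) (z t)
        = z T_a + ∫ τ in T_a..t, NormedSpace.exp ((T_a - τ) • F) (g τ) := by
      rw [← key]; abel
    have h2 := congrArg (fun x => NormedSpace.exp ((t - T_a) • F) x) h1
    simp only [map_add] at h2
    have h3 : NormedSpace.exp ((t - T_a) • F) (NormedSpace.exp ((T_a - t) • F) (z t))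
        = z t := by
      rw [← ContinuousLinearMap.mul_apply, hmul,
        show t - T_a + (T_a - t) = 0 by ring, hexpzero, ContinuousLinearMap.one_apply]
    rw [h3] at h2
    rw [h2]
    congr 1
    rw [← (NormedSpace.exp ((t - T_a) • F)).intervalIntegral_comp_comm
      (hintc.intervalIntegrable _ _)]
    refine intervalIntegral.integral_congr fun τ _ => ?_
    rw [← ContinuousLinearMap.mul_apply, hmul,
      show t - T_a + (T_a - τ) = t - τ by ring]
  -- bound on z T_a
  have hzTa : ‖z T_a‖ ≤ ebarTa + ‖H‖ * ρbar := by
    refine (norm_add_le _ _).trans (add_le_add hinit ?_)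
    exact (H.le_opNorm _).trans (mul_le_mul_of_nonneg_left (hρbound _) (norm_nonneg _))
  -- bound on z t
  have hbc : Continuous fun τ : ℝ => κ * Real.exp (-μ * (t - τ)) * c :=
    ((continuous_const.mul (Real.continuous_exp.comp
      (continuous_const.mul (continuous_const.sub continuous_id)))).mul continuous_const)
  have hzbound : ‖z t‖ ≤ κ * Real.exp (-μ * (t - T_a)) * (ebarTa + ‖H‖ * ρbar)
      + ∫ τ in T_a..t, κ * Real.exp (-μ * (t - τ)) * c := by
    rw [hzt]
    refine (norm_add_le _ _).trans (add_le_add ?_ ?_)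
    · refine (ContinuousLinearMap.le_opNorm _ _).trans ?_
      exact mul_le_mul (hFdecay _ (sub_nonneg.2 ht)) hzTa (norm_nonneg _)
        (by positivity)
    · refine (intervalIntegral.norm_integral_le_integral_norm ht).trans ?_
      refine intervalIntegral.integral_mono_on ht ?_ (hbc.intervalIntegrable _ _) ?_
      · exact (((hexpc t).clm_apply hgc).norm).intervalIntegrable _ _
      · intro τ hτ
        refine (ContinuousLinearMap.le_opNorm _ _).trans ?_
        exact mul_le_mul (hFdecay _ (sub_nonneg.2 hτ.2)) (hgbound τ) (norm_nonneg _)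
          (by positivity)
  -- conclude
  have hsplit : e t + ρ (t - T) = z t + (ρ (t - T) - H (ρ (t - T))) := by
    simp only [hz]; abel
  rw [hsplit, hebar t]
  have h4 : ‖z t + (ρ (t - T) - H (ρ (t - T)))‖
      ≤ ‖z t‖ + (ρbar + ‖H‖ * ρbar) := by
    refine (norm_add_le _ _).trans (add_le_add le_rfl ?_)
    refine (norm_sub_le _ _).trans (add_le_add (hρbound _) ?_)
    exact (H.le_opNorm _).trans (mul_le_mul_of_nonneg_left (hρbound _) (norm_nonneg _))
  linarith [hzbound]
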